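/- For 1 ≤ k ≤ n, the function λ ↦ σ_k(λ)^{1/k} is concave on the positive cone Γ₊ = {λ ∈ ℝⁿ : λᵢ > 0 for all i}. -/

import Mathlib

/-- The k-th elementary symmetric polynomial of `lam : Fin n → ℝ`. -/
noncomputable def sigmaE (n k : ℕ) (lam : Fin n → ℝ) : ℝ :=
  ∑ s ∈ Finset.powersetCard k (Finset.univ : Finset (Fin n)), ∏ i ∈ s, lam i

open Finset
set_option linter.unusedSectionVars false

noncomputable def esymF {ι : Type*} (A : Finset ι) (k : ℕ) (x : ι → ℝ) : ℝ :=
  ∑ s ∈ A.powersetCard k, ∏ i ∈ s, x i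

variable {ι : Type*} [DecidableEq ι]

lemma esymF_zero (A : Finset ι) (x : ι → ℝ) : esymF A 0 x = 1 := by simp [esymF]

lemma esymF_one (A : Finset ι) (x : ι → ℝ) : esymF A 1 x = ∑ i ∈ A, x i := by
  simp [esymF, powersetCard_one]

lemma esymF_pos {A : Finset ι} {k : ℕ} {x : ι → ℝ} (h : ∀ i ∈ A, 0 < x i)
    (hk : k ≤ A.card) : 0 < esymF A k x := by
  apply Finset.sum_pos
  · intro s hs
    rw [mem_powersetCard] at hs
    exact Finset.prod_pos fun i hi => h i (hs.1 hi)
  · exact powersetCard_nonempty.2 hk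

lemma esymF_erase {A : Finset ι} {i : ι} (hi : i ∈ A) (k : ℕ) (x : ι → ℝ) :
    esymF A (k+1) x = esymF (A.erase i) (k+1) x + x i * esymF (A.erase i) k x := by
  rw [esymF, ← sum_filter_add_sum_filter_not (A.powersetCard (k+1)) (fun s => i ∈ s)]
  have h1 : (A.powersetCard (k+1)).filter (fun s => ¬ i ∈ s) = (A.erase i).powersetCard (k+1) := by
    ext s
    simp only [mem_filter, mem_powersetCard, subset_erase]
    tauto
  have h2 : ∑ s ∈ (A.powersetCard (k+1)).filter (fun s => i ∈ s), ∏ j ∈ s, x j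
      = x i * esymF (A.erase i) k x := by
    rw [esymF, mul_sum]
    apply Finset.sum_bij' (fun s _ => Finset.erase s i) (fun t _ => insert i t)
    · intro s hs
      simp only [mem_filter, mem_powersetCard] at hs
      simp only [mem_powersetCard]
      constructor
      · exact erase_subset_erase i hs.1.1
      · rw [card_erase_of_mem hs.2, hs.1.2]; omega
    · intro t ht
      simp only [mem_powersetCard, subset_erase] at ht
      simp only [mem_filter, mem_powersetCard]
      refine ⟨⟨insert_subset hi ht.1.1, ?_⟩, mem_insert_self i t⟩
      rw [card_insert_of_notMem ht.1.2, ht.2]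
    · intro s hs
      simp only [mem_filter] at hs
      exact insert_erase hs.2
    · intro t ht
      simp only [mem_powersetCard, subset_erase] at ht
      exact erase_insert ht.1.2
    · intro s hs
      simp only [mem_filter] at hs
      exact (Finset.mul_prod_erase s x hs.2).symm
  rw [h1, h2, add_comm]
  rfl


lemma esymF_euler (A : Finset ι) (k : ℕ) (x : ι → ℝ) :
    ∑ i ∈ A, x i * esymF (A.erase i) k x = (k+1 : ℝ) * esymF A (k+1) x := by
  have hrhs : (k+1 : ℝ) * esymF A (k+1) x
      = ∑ t ∈ A.powersetCard (k+1), ∑ i ∈ t, x i * ∏ j ∈ t.erase i, x j := by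
    rw [esymF, mul_sum]
    refine sum_congr rfl fun t ht => ?_
    rw [mem_powersetCard] at ht
    have h : ∀ i ∈ t, x i * ∏ j ∈ t.erase i, x j = ∏ j ∈ t, x j := fun i hi =>
      Finset.mul_prod_erase t x hi
    rw [Finset.sum_congr rfl h, Finset.sum_const, ht.2, nsmul_eq_mul]
    push_cast; ring
  have hlhs : ∑ i ∈ A, x i * esymF (A.erase i) k x
      = ∑ i ∈ A, ∑ s ∈ (A.erase i).powersetCard k, x i * ∏ j ∈ s, x j := by
    refine sum_congr rfl fun i _ => ?_; rw [esymF, mul_sum]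
  rw [hrhs, hlhs, sum_sigma', sum_sigma']
  apply Finset.sum_bij' (fun p _ => (⟨insert p.1 p.2, p.1⟩ : Σ _t : Finset ι, ι))
    (fun q _ => (⟨q.2, q.1.erase q.2⟩ : Σ _i : ι, Finset ι))
  · rintro ⟨i, s⟩ hp
    simp only [mem_sigma, mem_powersetCard, subset_erase] at hp
    simp only [mem_sigma, mem_powersetCard]
    refine ⟨⟨insert_subset (hp.1) hp.2.1.1, ?_⟩, mem_insert_self _ _⟩
    rw [card_insert_of_notMem hp.2.1.2, hp.2.2]
  · rintro ⟨t, i⟩ hq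
    simp only [mem_sigma, mem_powersetCard] at hq
    simp only [mem_sigma, mem_powersetCard, subset_erase]
    refine ⟨hq.1.1 hq.2, ⟨⟨(erase_subset _ _).trans hq.1.1, notMem_erase _ _⟩, ?_⟩⟩
    rw [card_erase_of_mem hq.2, hq.1.2]; omega
  · rintro ⟨i, s⟩ hp
    simp only [mem_sigma, mem_powersetCard, subset_erase] at hp
    simp only [Sigma.mk.inj_iff, heq_eq_eq]
    exact ⟨trivial, by rw [erase_insert hp.2.1.2]⟩
  · rintro ⟨t, i⟩ hq
    simp only [mem_sigma, mem_powersetCard] at hq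
    simp only [Sigma.mk.inj_iff, heq_eq_eq]
    exact ⟨insert_erase hq.2, trivial⟩
  · rintro ⟨i, s⟩ hp
    simp only [mem_sigma, mem_powersetCard, subset_erase] at hp
    simp only []
    rw [erase_insert hp.2.1.2]

lemma sq_div_add_le {a b c d : ℝ} (hc : 0 < c) (hd : 0 < d) :
    (a+b)^2/(c+d) ≤ a^2/c + b^2/d := by
  rw [div_add_div _ _ hc.ne' hd.ne', div_le_div_iff₀ (by positivity) (by positivity)]
  nlinarith [sq_nonneg (a*d - b*c), mul_pos hc hd]

lemma esymF_formula {A : Finset ι} {x : ι → ℝ} (hx : ∀ i ∈ A, 0 < x i) {k : ℕ}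
    (hc : k + 2 ≤ A.card) :
    (k+2 : ℝ) * (esymF A (k+2) x / esymF A (k+1) x)
      = (∑ i ∈ A, x i) - ∑ i ∈ A, (x i)^2 * (esymF (A.erase i) k x / esymF A (k+1) x) := by
  have hE1 : 0 < esymF A (k+1) x := esymF_pos hx (by omega)
  have euler := esymF_euler A (k+1) x
  have herase : ∀ i ∈ A, x i * esymF (A.erase i) (k+1) x
      = x i * esymF A (k+1) x - (x i)^2 * esymF (A.erase i) k x := by
    intro i hi
    rw [esymF_erase hi k x]
    ring
  rw [Finset.sum_congr rfl herase, Finset.sum_sub_distrib, ← Finset.sum_mul] at euler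
  push_cast at euler ⊢
  have h2 : ∑ i ∈ A, (x i)^2 * (esymF (A.erase i) k x / esymF A (k+1) x)
      = (∑ i ∈ A, (x i)^2 * esymF (A.erase i) k x) / esymF A (k+1) x := by
    rw [sum_div]; exact sum_congr rfl fun i _ => (mul_div_assoc _ _ _).symm
  rw [h2]
  field_simp
  linarith [euler]

lemma marcus_lopes : ∀ (k : ℕ) (A : Finset ι) (x y : ι → ℝ), k + 1 ≤ A.card →
    (∀ i ∈ A, 0 < x i) → (∀ i ∈ A, 0 < y i) →
    esymF A (k+1) x / esymF A k x + esymF A (k+1) y / esymF A k y ≤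
      esymF A (k+1) (x + y) / esymF A k (x + y) := by
  intro k
  induction k with
  | zero =>
    intro A x y hc hx hy
    simp only [zero_add, esymF_zero, esymF_one, div_one, Pi.add_apply]
    rw [Finset.sum_add_distrib]
  | succ k ih =>
    intro A x y hc hx hy
    have hc' : k + 2 ≤ A.card := by omega
    have hz : ∀ i ∈ A, 0 < (x + y) i := fun i hi => add_pos (hx i hi) (hy i hi)
    have hfx := esymF_formula hx (k := k) hc'
    have hfy := esymF_formula hy (k := k) hc'
    have hfz := esymF_formula hz (k := k) hc'
    have hsumz : ∑ i ∈ A, (x + y) i = ∑ i ∈ A, x i + ∑ i ∈ A, y i := by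
      simp [Finset.sum_add_distrib]
    have hterm : ∀ i ∈ A,
        ((x+y) i)^2 * (esymF (A.erase i) k (x+y) / esymF A (k+1) (x+y))
        ≤ (x i)^2 * (esymF (A.erase i) k x / esymF A (k+1) x)
          + (y i)^2 * (esymF (A.erase i) k y / esymF A (k+1) y) := by
      intro i hi
      have hxe : ∀ j ∈ A.erase i, 0 < x j := fun j hj => hx j (mem_of_mem_erase hj)
      have hye : ∀ j ∈ A.erase i, 0 < y j := fun j hj => hy j (mem_of_mem_erase hj)
      have hze : ∀ j ∈ A.erase i, 0 < (x+y) j := fun j hj => hz j (mem_of_mem_erase hj)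
      have hcard : k + 1 ≤ (A.erase i).card := by
        rw [card_erase_of_mem hi]; omega
      have hx0 : 0 < esymF (A.erase i) k x := esymF_pos hxe (by omega)
      have hx1 : 0 < esymF (A.erase i) (k+1) x := esymF_pos hxe hcard
      have hy0 : 0 < esymF (A.erase i) k y := esymF_pos hye (by omega)
      have hy1 : 0 < esymF (A.erase i) (k+1) y := esymF_pos hye hcard
      have hz0 : 0 < esymF (A.erase i) k (x+y) := esymF_pos hze (by omega)
      have hz1 : 0 < esymF (A.erase i) (k+1) (x+y) := esymF_pos hze hcard
      have hih := ih (A.erase i) x y hcard hxe hye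
      have tx : (x i)^2 * (esymF (A.erase i) k x / esymF A (k+1) x)
          = (x i)^2 / (x i + esymF (A.erase i) (k+1) x / esymF (A.erase i) k x) := by
        rw [esymF_erase hi k x]; field_simp; ring
      have ty : (y i)^2 * (esymF (A.erase i) k y / esymF A (k+1) y)
          = (y i)^2 / (y i + esymF (A.erase i) (k+1) y / esymF (A.erase i) k y) := by
        rw [esymF_erase hi k y]; field_simp; ring
      have tz : ((x+y) i)^2 * (esymF (A.erase i) k (x+y) / esymF A (k+1) (x+y))
          = ((x+y) i)^2 / ((x+y) i + esymF (A.erase i) (k+1) (x+y) / esymF (A.erase i) k (x+y)) := by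
        rw [esymF_erase hi k (x+y)]; field_simp; ring
      rw [tx, ty, tz]
      have hcx : 0 < x i + esymF (A.erase i) (k+1) x / esymF (A.erase i) k x :=
        add_pos (hx i hi) (div_pos hx1 hx0)
      have hcy : 0 < y i + esymF (A.erase i) (k+1) y / esymF (A.erase i) k y :=
        add_pos (hy i hi) (div_pos hy1 hy0)
      have hdenom : (x i + esymF (A.erase i) (k+1) x / esymF (A.erase i) k x)
          + (y i + esymF (A.erase i) (k+1) y / esymF (A.erase i) k y)
          ≤ (x+y) i + esymF (A.erase i) (k+1) (x+y) / esymF (A.erase i) k (x+y) := by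
        have hxy : (x+y) i = x i + y i := rfl
        rw [hxy]; linarith [hih]
      calc ((x+y) i)^2 / ((x+y) i + esymF (A.erase i) (k+1) (x+y) / esymF (A.erase i) k (x+y))
          ≤ ((x+y) i)^2 / ((x i + esymF (A.erase i) (k+1) x / esymF (A.erase i) k x)
              + (y i + esymF (A.erase i) (k+1) y / esymF (A.erase i) k y)) := by
            gcongr
        _ ≤ (x i)^2 / (x i + esymF (A.erase i) (k+1) x / esymF (A.erase i) k x)
              + (y i)^2 / (y i + esymF (A.erase i) (k+1) y / esymF (A.erase i) k y) := by
            have hxy : (x+y) i = x i + y i := rfl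
            rw [hxy]
            exact sq_div_add_le hcx hcy
    have hsum := Finset.sum_le_sum hterm
    rw [Finset.sum_add_distrib] at hsum
    have h2 : (0:ℝ) < (k:ℝ) + 2 := by positivity
    have final : ((k:ℝ)+2) * (esymF A (k+2) x / esymF A (k+1) x + esymF A (k+2) y / esymF A (k+1) y)
        ≤ ((k:ℝ)+2) * (esymF A (k+2) (x+y) / esymF A (k+1) (x+y)) := by
      rw [mul_add]
      push_cast at hfx hfy hfz
      rw [hfx, hfy, hfz, hsumz]
      linarith
    exact le_of_mul_le_mul_left final h2

lemma gm_superadd {k : ℕ} (hk : 1 ≤ k) (a b : ℕ → ℝ)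
    (ha : ∀ j ∈ Finset.range k, 0 < a j) (hb : ∀ j ∈ Finset.range k, 0 < b j) :
    (∏ j ∈ Finset.range k, a j) ^ ((1:ℝ)/k) + (∏ j ∈ Finset.range k, b j) ^ ((1:ℝ)/k)
      ≤ (∏ j ∈ Finset.range k, (a j + b j)) ^ ((1:ℝ)/k) := by
  have hk0 : (k:ℝ) ≠ 0 := by positivity
  have hab : ∀ j ∈ Finset.range k, 0 < a j + b j := fun j hj => add_pos (ha j hj) (hb j hj)
  have hPab : 0 < ∏ j ∈ Finset.range k, (a j + b j) := Finset.prod_pos hab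
  have hPa : 0 < ∏ j ∈ Finset.range k, a j := Finset.prod_pos ha
  have hPb : 0 < ∏ j ∈ Finset.range k, b j := Finset.prod_pos hb
  have hw : ∀ j ∈ Finset.range k, (0:ℝ) ≤ 1/k := fun j _ => by positivity
  have hw1 : ∑ _j ∈ Finset.range k, (1:ℝ)/k = 1 := by
    rw [Finset.sum_const, Finset.card_range, nsmul_eq_mul]
    field_simp
  have h1 := Real.geom_mean_le_arith_mean_weighted (Finset.range k) (fun _ => 1/k)
    (fun j => a j / (a j + b j)) hw hw1
    (fun j hj => (div_pos (ha j hj) (hab j hj)).le)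
  have h2 := Real.geom_mean_le_arith_mean_weighted (Finset.range k) (fun _ => 1/k)
    (fun j => b j / (a j + b j)) hw hw1
    (fun j hj => (div_pos (hb j hj) (hab j hj)).le)
  have hsum : ∑ j ∈ Finset.range k, (1:ℝ)/k * (a j / (a j + b j))
      + ∑ j ∈ Finset.range k, (1:ℝ)/k * (b j / (a j + b j)) = 1 := by
    rw [← Finset.sum_add_distrib, ← hw1]
    refine Finset.sum_congr rfl fun j hj => ?_
    have := (hab j hj).ne'
    rw [hw1, ← mul_add, ← add_div, div_self this, mul_one]
  have hprod1 : ∏ j ∈ Finset.range k, (a j / (a j + b j)) ^ ((1:ℝ)/k)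
      = (∏ j ∈ Finset.range k, a j) ^ ((1:ℝ)/k) / (∏ j ∈ Finset.range k, (a j + b j)) ^ ((1:ℝ)/k) := by
    rw [← Real.div_rpow hPa.le hPab.le, ← Finset.prod_div_distrib]
    exact Real.finset_prod_rpow _ _ (fun j hj => (div_pos (ha j hj) (hab j hj)).le) _
  have hprod2 : ∏ j ∈ Finset.range k, (b j / (a j + b j)) ^ ((1:ℝ)/k)
      = (∏ j ∈ Finset.range k, b j) ^ ((1:ℝ)/k) / (∏ j ∈ Finset.range k, (a j + b j)) ^ ((1:ℝ)/k) := by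
    rw [← Real.div_rpow hPb.le hPab.le, ← Finset.prod_div_distrib]
    exact Real.finset_prod_rpow _ _ (fun j hj => (div_pos (hb j hj) (hab j hj)).le) _
  rw [hprod1] at h1
  rw [hprod2] at h2
  have hPabr : 0 < (∏ j ∈ Finset.range k, (a j + b j)) ^ ((1:ℝ)/k) := Real.rpow_pos_of_pos hPab _
  have h1' : (∏ j ∈ Finset.range k, a j) ^ ((1:ℝ)/k) / (∏ j ∈ Finset.range k, (a j + b j)) ^ ((1:ℝ)/k)
      ≤ ∑ j ∈ Finset.range k, (1:ℝ)/k * (a j / (a j + b j)) := h1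
  have h2' : (∏ j ∈ Finset.range k, b j) ^ ((1:ℝ)/k) / (∏ j ∈ Finset.range k, (a j + b j)) ^ ((1:ℝ)/k)
      ≤ ∑ j ∈ Finset.range k, (1:ℝ)/k * (b j / (a j + b j)) := h2
  have key : (∏ j ∈ Finset.range k, a j) ^ ((1:ℝ)/k) / (∏ j ∈ Finset.range k, (a j + b j)) ^ ((1:ℝ)/k)
      + (∏ j ∈ Finset.range k, b j) ^ ((1:ℝ)/k) / (∏ j ∈ Finset.range k, (a j + b j)) ^ ((1:ℝ)/k)
      ≤ 1 := by
    calc _ ≤ ∑ j ∈ Finset.range k, (1:ℝ)/k * (a j / (a j + b j))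
        + ∑ j ∈ Finset.range k, (1:ℝ)/k * (b j / (a j + b j)) := add_le_add h1' h2'
      _ = 1 := hsum
  rw [← add_div, div_le_one hPabr] at key
  exact key

lemma esymF_prod_ratio {A : Finset ι} {x : ι → ℝ} (hx : ∀ i ∈ A, 0 < x i) :
    ∀ k, k ≤ A.card → ∏ j ∈ Finset.range k, (esymF A (j+1) x / esymF A j x) = esymF A k x := by
  intro k
  induction k with
  | zero => intro _; simp [esymF_zero]
  | succ k ih =>
    intro hk
    rw [Finset.prod_range_succ, ih (by omega), mul_comm,
      div_mul_cancel₀ _ (esymF_pos hx (by omega)).ne']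

lemma esymF_rpow_superadd {A : Finset ι} {k : ℕ} (hk1 : 1 ≤ k) (hk : k ≤ A.card)
    {x y : ι → ℝ} (hx : ∀ i ∈ A, 0 < x i) (hy : ∀ i ∈ A, 0 < y i) :
    esymF A k x ^ ((1:ℝ)/k) + esymF A k y ^ ((1:ℝ)/k) ≤ esymF A k (x+y) ^ ((1:ℝ)/k) := by
  have hz : ∀ i ∈ A, 0 < (x+y) i := fun i hi => add_pos (hx i hi) (hy i hi)
  set a : ℕ → ℝ := fun j => esymF A (j+1) x / esymF A j x with ha
  set b : ℕ → ℝ := fun j => esymF A (j+1) y / esymF A j y with hb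
  have hapos : ∀ j ∈ Finset.range k, 0 < a j := fun j hj => by
    have hj' := Finset.mem_range.1 hj
    exact div_pos (esymF_pos hx (by omega)) (esymF_pos hx (by omega))
  have hbpos : ∀ j ∈ Finset.range k, 0 < b j := fun j hj => by
    have hj' := Finset.mem_range.1 hj
    exact div_pos (esymF_pos hy (by omega)) (esymF_pos hy (by omega))
  have hprodx : ∏ j ∈ Finset.range k, a j = esymF A k x := esymF_prod_ratio hx k hk
  have hprody : ∏ j ∈ Finset.range k, b j = esymF A k y := esymF_prod_ratio hy k hk
  have hml : ∏ j ∈ Finset.range k, (a j + b j) ≤ esymF A k (x+y) := by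
    rw [← esymF_prod_ratio hz k hk]
    apply Finset.prod_le_prod
    · intro j hj; exact (add_pos (hapos j hj) (hbpos j hj)).le
    · intro j hj
      have hj' := Finset.mem_range.1 hj
      exact marcus_lopes j A x y (by omega) hx hy
  have := gm_superadd hk1 a b hapos hbpos
  rw [hprodx, hprody] at this
  refine this.trans (Real.rpow_le_rpow (Finset.prod_pos
    (fun j hj => add_pos (hapos j hj) (hbpos j hj))).le hml (by positivity))

lemma esymF_smul (A : Finset ι) (k : ℕ) (x : ι → ℝ) (c : ℝ) :
    esymF A k (c • x) = c^k * esymF A k x := by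
  rw [esymF, esymF, mul_sum]
  refine sum_congr rfl fun s hs => ?_
  rw [mem_powersetCard] at hs
  calc ∏ i ∈ s, (c • x) i = ∏ i ∈ s, (c * x i) := rfl
    _ = (∏ _i ∈ s, c) * ∏ i ∈ s, x i := Finset.prod_mul_distrib
    _ = c^k * ∏ i ∈ s, x i := by rw [Finset.prod_const, hs.2]


theorem stmt9 (n k : ℕ) (hk1 : 1 ≤ k) (hkn : k ≤ n) :
    ConcaveOn ℝ {lam : Fin n → ℝ | ∀ i, 0 < lam i}
      (fun lam => (sigmaE n k lam) ^ ((1 : ℝ) / (k : ℝ))) := by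
  have hcard : k ≤ (Finset.univ : Finset (Fin n)).card := by simpa using hkn
  have hsig : ∀ lam : Fin n → ℝ, sigmaE n k lam = esymF Finset.univ k lam := fun _ => rfl
  have hhom : ∀ (c : ℝ), 0 < c → ∀ w : Fin n → ℝ, (∀ i, 0 < w i) →
      sigmaE n k (c • w) ^ ((1:ℝ)/k) = c * sigmaE n k w ^ ((1:ℝ)/k) := by
    intro c hc w hw
    rw [hsig, hsig, esymF_smul]
    rw [Real.mul_rpow (by positivity) (esymF_pos (fun i _ => hw i) hcard).le]
    congr 1
    rw [← Real.rpow_natCast c k, ← Real.rpow_mul hc.le, mul_one_div,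
      div_self (by positivity : (k:ℝ) ≠ 0), Real.rpow_one]
  constructor
  · intro p hp q hq a b ha hb hab
    simp only [Set.mem_setOf_eq] at hp hq ⊢
    intro i
    simp only [Pi.add_apply, Pi.smul_apply, smul_eq_mul]
    rcases eq_or_lt_of_le ha with h | h
    · have hb1 : b = 1 := by linarith
      rw [← h, hb1]; simpa using hq i
    · have h1 : 0 ≤ b * q i := mul_nonneg hb (hq i).le
      have h2 := mul_pos h (hp i)
      linarith
  · intro p hp q hq a b ha hb hab
    simp only [Set.mem_setOf_eq] at hp hq
    simp only [smul_eq_mul]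
    rcases eq_or_lt_of_le ha with h | hapos
    · have hb1 : b = 1 := by linarith
      rw [← h, hb1]; simp
    rcases eq_or_lt_of_le hb with h | hbpos
    · have ha1 : a = 1 := by linarith
      rw [← h, ha1]; simp
    have hap : ∀ i, 0 < (a • p) i := fun i => mul_pos hapos (hp i)
    have hbq : ∀ i, 0 < (b • q) i := fun i => mul_pos hbpos (hq i)
    have hsuper := esymF_rpow_superadd (A := (Finset.univ : Finset (Fin n))) hk1 hcard
      (x := a • p) (y := b • q) (fun i _ => hap i) (fun i _ => hbq i)
    rw [← hsig, ← hsig, ← hsig] at hsuper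
    rw [hhom a hapos p hp, hhom b hbpos q hq] at hsuper
    simpa [smul_eq_mul] using hsuper
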